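/- Let n ≥ 4 and let φ be a permutation of I = {1,…,n}. The following are equivalent: (i) there is a special decomposition of 𝔐_{(n,φ)}; (ii) n = 4 and there is a subset X ⊂ I with |X| = 2 and φ(X) = X. -/

import Mathlib

abbrev MPoint (n : ℕ) := Fin n ⊕ Fin n

/-- The block `A_i = (A \ {a_i}) ∪ {b_i}`. -/
def Ablock (n : ℕ) (i : Fin n) : Set (MPoint n) :=
  Sum.inl '' {j | j ≠ i} ∪ {Sum.inr i}

/-- The block `B_i = (B \ {b_i}) ∪ {a_{φ(i)}}`. -/
def Bblock (n : ℕ) (φ : Equiv.Perm (Fin n)) (i : Fin n) : Set (MPoint n) :=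
  Sum.inr '' {j | j ≠ i} ∪ {Sum.inl (φ i)}

def ABlocks (n : ℕ) : Set (Set (MPoint n)) := Set.range (Ablock n)

def BBlocks (n : ℕ) (φ : Equiv.Perm (Fin n)) : Set (Set (MPoint n)) := Set.range (Bblock n φ)

/-- The blocks of the Möbius `n`-pair `𝔐_{(n,φ)}`; its point set is all of `MPoint n`. -/
def MBlocks (n : ℕ) (φ : Equiv.Perm (Fin n)) : Set (Set (MPoint n)) :=
  ABlocks n ∪ BBlocks n φ

/-- A "simplex" of a decomposition: a pair (points, blocks). -/
abbrev MSimplex (n : ℕ) := Set (MPoint n) × Set (Set (MPoint n))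

def SimplexA (n : ℕ) : MSimplex n := (Set.range Sum.inl, ABlocks n)

def SimplexB (n : ℕ) (φ : Equiv.Perm (Fin n)) : MSimplex n := (Set.range Sum.inr, BBlocks n φ)

/-- A decomposition of 𝔐_{(n,φ)} into two complementary mutually inscribed n-simplices. -/
def IsDecomp (n : ℕ) (φ : Equiv.Perm (Fin n)) (S₁ S₂ : MSimplex n) : Prop :=
  S₁.1 ∪ S₂.1 = Set.univ ∧ Disjoint S₁.1 S₂.1 ∧ S₁.1.ncard = n ∧ S₂.1.ncard = n ∧
  S₁.2 ∪ S₂.2 = MBlocks n φ ∧ Disjoint S₁.2 S₂.2 ∧ S₁.2.ncard = n ∧ S₂.2.ncard = n ∧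
  (∀ l ∈ S₁.2, (l ∩ S₁.1).ncard = n - 1 ∧ (l ∩ S₂.1).ncard = 1) ∧
  (∀ l ∈ S₂.2, (l ∩ S₂.1).ncard = n - 1 ∧ (l ∩ S₁.1).ncard = 1) ∧
  (∀ p ∈ S₁.1, {l ∈ S₁.2 | p ∈ l}.ncard = n - 1 ∧ {l ∈ S₂.2 | p ∈ l}.ncard = 1) ∧
  (∀ p ∈ S₂.1, {l ∈ S₂.2 | p ∈ l}.ncard = n - 1 ∧ {l ∈ S₁.2 | p ∈ l}.ncard = 1)

/-- A special decomposition: one in which both simplices differ from S_A and S_B. -/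
def IsSpecialDecomp (n : ℕ) (φ : Equiv.Perm (Fin n)) (S₁ S₂ : MSimplex n) : Prop :=
  IsDecomp n φ S₁ S₂ ∧
  S₁ ≠ SimplexA n ∧ S₁ ≠ SimplexB n φ ∧ S₂ ≠ SimplexA n ∧ S₂ ≠ SimplexB n φ

open Set

section Helpers

variable {n : ℕ} {φ : Equiv.Perm (Fin n)}

lemma mem_Ablock_inl {i j : Fin n} : Sum.inl j ∈ Ablock n i ↔ j ≠ i := by
  simp [Ablock]

lemma mem_Ablock_inr {i j : Fin n} : Sum.inr j ∈ Ablock n i ↔ j = i := by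
  simp [Ablock]

lemma mem_Bblock_inl {i j : Fin n} : Sum.inl j ∈ Bblock n φ i ↔ j = φ i := by
  simp [Bblock]

lemma mem_Bblock_inr {i j : Fin n} : Sum.inr j ∈ Bblock n φ i ↔ j ≠ i := by
  simp [Bblock]

lemma ncard_inl_inr (S T : Set (Fin n)) :
    ((Sum.inl '' S ∪ Sum.inr '' T : Set (MPoint n))).ncard = S.ncard + T.ncard := by
  rw [ncard_union_eq (by simp [Set.disjoint_left]) (toFinite _) (toFinite _),
    ncard_image_of_injective _ Sum.inl_injective, ncard_image_of_injective _ Sum.inr_injective]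

lemma Ablock_injective : Function.Injective (Ablock n) := by
  intro i j h
  have : Sum.inr i ∈ Ablock n j := h ▸ mem_Ablock_inr.mpr rfl
  exact mem_Ablock_inr.mp this

lemma Bblock_injective : Function.Injective (Bblock n φ) := by
  intro i j h
  by_contra hij
  have h1 : Sum.inr j ∈ Bblock n φ j := h ▸ mem_Bblock_inr.mpr (Ne.symm hij)
  exact mem_Bblock_inr.mp h1 rfl

lemma ncard_compl_eq (X : Set (Fin n)) : Xᶜ.ncard = n - X.ncard := by
  have := Set.ncard_add_ncard_compl X (toFinite _) (toFinite _)
  simp only [Nat.card_eq_fintype_card, Fintype.card_fin] at this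
  omega

lemma ncard_le_card (X : Set (Fin n)) : X.ncard ≤ n := by
  have := Set.ncard_add_ncard_compl X (toFinite _) (toFinite _)
  simp only [Nat.card_eq_fintype_card, Fintype.card_fin] at this
  omega

lemma eq_univ_of_ncard (X : Set (Fin n)) (h : X.ncard = n) : X = univ := by
  have hc : Xᶜ.ncard = 0 := by rw [ncard_compl_eq, h]; omega
  have : Xᶜ = ∅ := (Set.ncard_eq_zero (toFinite _)).mp hc
  rw [← compl_compl X, this, compl_empty]

lemma exists_two_ne (hn : 3 ≤ n) (j : Fin n) : ∃ a b : Fin n, a ≠ j ∧ b ≠ j ∧ a ≠ b := by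
  have h1 : 1 < ({j}ᶜ : Set (Fin n)).ncard := by
    rw [ncard_compl_eq, ncard_singleton]; omega
  obtain ⟨a, b, ha, hb, hab⟩ := (one_lt_ncard_iff (toFinite _)).mp h1
  exact ⟨a, b, ha, hb, hab⟩

lemma Ablock_ne_Bblock (hn : 3 ≤ n) (i j : Fin n) : Ablock n i ≠ Bblock n φ j := by
  intro h
  obtain ⟨a, b, ha, hb, hab⟩ := exists_two_ne hn j
  have h1 : Sum.inr a ∈ Ablock n i := h ▸ mem_Bblock_inr.mpr ha
  have h2 : Sum.inr b ∈ Ablock n i := h ▸ mem_Bblock_inr.mpr hb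
  exact hab ((mem_Ablock_inr.mp h1).trans (mem_Ablock_inr.mp h2).symm)

lemma ncard_blocks (hn : 3 ≤ n) (U V : Set (Fin n)) :
    (Ablock n '' U ∪ Bblock n φ '' V).ncard = U.ncard + V.ncard := by
  rw [ncard_union_eq ?_ (toFinite _) (toFinite _),
    ncard_image_of_injective _ Ablock_injective, ncard_image_of_injective _ Bblock_injective]
  rw [Set.disjoint_left]
  rintro l ⟨i, -, rfl⟩ ⟨k, -, hk⟩
  exact Ablock_ne_Bblock hn i k hk.symm

lemma inter_Ablock (i : Fin n) (S T : Set (Fin n)) :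
    Ablock n i ∩ (Sum.inl '' S ∪ Sum.inr '' T) =
      Sum.inl '' (S \ {i}) ∪ Sum.inr '' (T ∩ {i}) := by
  ext x
  rcases x with j | j <;>
    simp [mem_Ablock_inl, mem_Ablock_inr, Ablock, and_comm, eq_comm]

lemma inter_Bblock (i : Fin n) (S T : Set (Fin n)) :
    Bblock n φ i ∩ (Sum.inl '' S ∪ Sum.inr '' T) =
      Sum.inl '' (S ∩ {φ i}) ∪ Sum.inr '' (T \ {i}) := by
  ext x
  rcases x with j | j <;>
    simp [mem_Bblock_inl, mem_Bblock_inr, Bblock, and_comm, eq_comm]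

lemma sum_decomp (P : Set (MPoint n)) :
    P = Sum.inl '' (Sum.inl ⁻¹' P) ∪ Sum.inr '' (Sum.inr ⁻¹' P) := by
  ext x; rcases x with j | j <;> simp

lemma filt (p : MPoint n) (U V : Set (Fin n)) :
    {l ∈ Ablock n '' U ∪ Bblock n φ '' V | p ∈ l} =
      Ablock n '' {i ∈ U | p ∈ Ablock n i} ∪ Bblock n φ '' {i ∈ V | p ∈ Bblock n φ i} := by
  ext l
  constructor
  · rintro ⟨⟨i, hi, rfl⟩ | ⟨i, hi, rfl⟩, hp⟩
    · exact Or.inl ⟨i, ⟨hi, hp⟩, rfl⟩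
    · exact Or.inr ⟨i, ⟨hi, hp⟩, rfl⟩
  · rintro (⟨i, ⟨hi, hp⟩, rfl⟩ | ⟨i, ⟨hi, hp⟩, rfl⟩)
    · exact ⟨Or.inl ⟨i, hi, rfl⟩, hp⟩
    · exact ⟨Or.inr ⟨i, hi, rfl⟩, hp⟩

lemma ncard_inter_singleton_of_mem {X : Set (Fin n)} {i : Fin n} (h : i ∈ X) :
    (X ∩ {i}).ncard = 1 := by
  rw [Set.inter_eq_self_of_subset_right (by simpa), ncard_singleton]

lemma ncard_inter_singleton_of_not_mem {X : Set (Fin n)} {i : Fin n} (h : i ∉ X) :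
    (X ∩ {i}).ncard = 0 := by
  rw [(Set.inter_singleton_eq_empty).mpr h, ncard_empty]

lemma key (X Y : Set (Fin n)) (i j : Fin n) (h2 : 2 ≤ X.ncard)
    (h : (X \ {i}).ncard + (Y ∩ {j}).ncard = 1) :
    X.ncard = 2 ∧ i ∈ X ∧ j ∉ Y := by
  by_cases hi : i ∈ X
  · rw [ncard_diff_singleton_of_mem hi] at h
    by_cases hj : j ∈ Y
    · rw [ncard_inter_singleton_of_mem hj] at h; omega
    · exact ⟨by rw [ncard_inter_singleton_of_not_mem hj] at h; omega, hi, hj⟩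
  · rw [Set.diff_singleton_eq_self hi] at h; omega

lemma key2 (X : Set (Fin n)) (i : Fin n) (m : ℕ) (h3 : 3 ≤ X.ncard)
    (h : (X \ {i}).ncard + m = 1) : False := by
  have := Set.pred_ncard_le_ncard_diff_singleton X i
  omega

lemma combo (hn : 4 ≤ n) (φ : Equiv.Perm (Fin n)) (S T U V : Set (Fin n))
    (hST : S.ncard + T.ncard = n) (hUV : U.ncard + V.ncard = n)
    (c1 : ∀ i ∈ U, (Sᶜ \ {i}).ncard + (Tᶜ ∩ {i}).ncard = 1)
    (c2 : ∀ i ∉ U, (S \ {i}).ncard + (T ∩ {i}).ncard = 1)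
    (c3 : ∀ i ∈ V, (Sᶜ ∩ {φ i}).ncard + (Tᶜ \ {i}).ncard = 1)
    (c4 : ∀ i ∉ V, (S ∩ {φ i}).ncard + (T \ {i}).ncard = 1)
    (hnotA : ¬(S = univ ∧ U = univ)) (hnotB : ¬(S = ∅ ∧ U = ∅)) :
    n = 4 ∧ S.ncard = 2 ∧ φ '' S = S := by
  have hSc : Sᶜ.ncard = n - S.ncard := ncard_compl_eq S
  have hTc : Tᶜ.ncard = n - T.ncard := ncard_compl_eq T
  have hSn : S.ncard ≤ n := ncard_le_card S
  have hUn : U.ncard ≤ n := ncard_le_card U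
  -- rule out S.ncard = n
  have hs_ne_n : S.ncard ≠ n := by
    intro hs
    have hT0 : T = ∅ := (Set.ncard_eq_zero (toFinite _)).mp (by omega)
    have hTcu : Tᶜ.ncard = n := by omega
    have hV : V = ∅ := by
      ext i; simp only [mem_empty_iff_false, iff_false]
      intro hi
      have h := c3 i hi
      exact key2 Tᶜ i ((Sᶜ ∩ {φ i}).ncard) (by omega) (by omega)
    have hU : U = univ := eq_univ_of_ncard U (by
      rw [hV, ncard_empty] at hUV; omega)
    exact hnotA ⟨eq_univ_of_ncard S hs, hU⟩
  -- rule out S.ncard = 0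
  have hs_ne_0 : S.ncard ≠ 0 := by
    intro hs
    have hS0 : S = ∅ := (Set.ncard_eq_zero (toFinite _)).mp hs
    have hU : U = ∅ := by
      ext i; simp only [mem_empty_iff_false, iff_false]
      intro hi
      exact key2 Sᶜ i _ (by omega) (c1 i hi)
    exact hnotB ⟨hS0, hU⟩
  -- rule out S.ncard = n - 1
  have hs_ne_n1 : S.ncard ≠ n - 1 := by
    intro hs
    have hU : U = univ := by
      rw [Set.eq_univ_iff_forall]
      intro i
      by_contra hi
      exact key2 S i _ (by omega) (c2 i hi)
    obtain ⟨s₀, hs₀⟩ := Set.ncard_eq_one.mp (show Sᶜ.ncard = 1 by omega)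
    have hTsub : Tᶜ ⊆ {s₀} := by
      intro x hx
      by_contra hxs
      have h := c1 x (hU ▸ mem_univ x)
      rw [hs₀] at h
      rw [Set.diff_singleton_eq_self (by simpa using hxs), ncard_singleton] at h
      by_cases hh : x ∈ Tᶜ
      · rw [ncard_inter_singleton_of_mem hh] at h; omega
      · exact hh hx
    have : Tᶜ.ncard ≤ 1 := by
      calc Tᶜ.ncard ≤ ({s₀} : Set (Fin n)).ncard := ncard_le_ncard hTsub (toFinite _)
        _ = 1 := ncard_singleton _
    omega
  -- rule out S.ncard = 1
  have hs_ne_1 : S.ncard ≠ 1 := by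
    intro hs
    have hV : V = univ := by
      rw [Set.eq_univ_iff_forall]
      intro i
      by_contra hi
      have h := c4 i hi
      exact key2 T i ((S ∩ {φ i}).ncard) (by omega) (by omega)
    obtain ⟨t₀, ht₀⟩ := Set.ncard_eq_one.mp (show Tᶜ.ncard = 1 by omega)
    obtain ⟨s₀, hs₀⟩ := Set.ncard_eq_one.mp hs
    have hphi : ∀ i : Fin n, i ≠ t₀ → φ i = s₀ := by
      intro i hit
      have h := c3 i (hV ▸ mem_univ i)
      rw [ht₀, Set.diff_singleton_eq_self (by simpa using hit), ncard_singleton] at h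
      by_cases hh : φ i ∈ Sᶜ
      · rw [ncard_inter_singleton_of_mem hh] at h; omega
      · have : φ i ∈ S := by simpa using hh
        rw [hs₀] at this; simpa using this
    obtain ⟨a, b, ha, hb, hab⟩ := (one_lt_ncard_iff (toFinite ({t₀}ᶜ : Set (Fin n)))).mp
      (by rw [ncard_compl_eq, ncard_singleton]; omega)
    exact hab (φ.injective (((hphi a (by simpa using ha)).trans
      (hphi b (by simpa using hb)).symm)))
  -- now 2 ≤ S.ncard ≤ n - 2
  have hS2 : 2 ≤ S.ncard := by omega
  have hSc2 : 2 ≤ Sᶜ.ncard := by omega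
  have hT2 : 2 ≤ T.ncard := by omega
  have hTc2 : 2 ≤ Tᶜ.ncard := by omega
  have hUne : U ≠ ∅ := by
    intro hU
    have hVu : V = univ := eq_univ_of_ncard V (by rw [hU, ncard_empty] at hUV; omega)
    obtain ⟨i, hi⟩ := Set.nonempty_of_ncard_ne_zero (show T.ncard ≠ 0 by omega)
    have h := c3 i (hVu ▸ mem_univ i)
    have := (key Tᶜ Sᶜ i (φ i) hTc2 (by omega)).2.1
    exact (by simpa using this : i ∉ T) hi
  have hUnu : U ≠ univ := by
    intro hU
    have hV0 : V = ∅ := (Set.ncard_eq_zero (toFinite _)).mp (by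
      have : U.ncard = n := by rw [hU, ncard_univ]; simp
      omega)
    obtain ⟨i, hi⟩ := Set.nonempty_of_ncard_ne_zero (show Tᶜ.ncard ≠ 0 by omega)
    have h := c4 i (by rw [hV0]; exact notMem_empty i)
    have := (key T S i (φ i) hT2 (by omega)).2.1
    exact (by simpa using hi : i ∉ T) this
  obtain ⟨u₀, hu₀⟩ := Set.nonempty_iff_ne_empty.mpr hUne
  obtain ⟨u₁, hu₁⟩ := Set.nonempty_compl.mpr hUnu
  have hScn : Sᶜ.ncard = 2 := (key Sᶜ Tᶜ u₀ u₀ hSc2 (c1 u₀ hu₀)).1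
  have hSn2 : S.ncard = 2 := (key S T u₁ u₁ hS2 (c2 u₁ hu₁)).1
  have hn4 : n = 4 := by omega
  refine ⟨hn4, hSn2, ?_⟩
  have hU1 : ∀ i ∈ U, i ∈ Sᶜ ∧ i ∈ T := by
    intro i hi
    obtain ⟨-, h1, h2⟩ := key Sᶜ Tᶜ i i hSc2 (c1 i hi)
    exact ⟨h1, by simpa using h2⟩
  have hU2 : ∀ i ∉ U, i ∈ S ∧ i ∉ T := by
    intro i hi
    obtain ⟨-, h1, h2⟩ := key S T i i hS2 (c2 i hi)
    exact ⟨h1, h2⟩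
  have hV1 : ∀ i ∈ V, i ∈ Tᶜ ∧ φ i ∈ S := by
    intro i hi
    obtain ⟨-, h1, h2⟩ := key Tᶜ Sᶜ i (φ i) hTc2 (by have := c3 i hi; omega)
    exact ⟨h1, by simpa using h2⟩
  have hV2 : ∀ i ∉ V, i ∈ T ∧ φ i ∉ S := by
    intro i hi
    obtain ⟨-, h1, h2⟩ := key T S i (φ i) hT2 (by have := c4 i hi; omega)
    exact ⟨h1, h2⟩
  have hTS : T = Sᶜ := by
    ext x
    constructor
    · intro hx
      by_cases hxU : x ∈ U
      · exact (hU1 x hxU).1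
      · exact absurd hx (hU2 x hxU).2
    · intro hx
      by_cases hxU : x ∈ U
      · exact (hU1 x hxU).2
      · exact absurd (hU2 x hxU).1 (by simpa using hx)
  have himg : φ '' S ⊆ S := by
    rintro - ⟨x, hx, rfl⟩
    by_cases hxV : x ∈ V
    · exact (hV1 x hxV).2
    · exact absurd (hV2 x hxV).1 (by rw [hTS]; simpa using hx)
  exact Set.eq_of_subset_of_ncard_le himg
    (by rw [ncard_image_of_injective _ φ.injective]) (toFinite _)

end Helpers

section Construction

variable {φ : Equiv.Perm (Fin 4)}

lemma blockcount (Y : Set (Fin 4)) (hY : Y.ncard = 2) (hYφ : φ '' Y = Y)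
    (l : Set (MPoint 4)) (hl : l ∈ Ablock 4 '' Yᶜ ∪ Bblock 4 φ '' Y) :
    (l ∩ (Sum.inl '' Y ∪ Sum.inr '' Yᶜ)).ncard = 3 ∧
      (l ∩ (Sum.inl '' Yᶜ ∪ Sum.inr '' Y)).ncard = 1 := by
  have hYc : Yᶜ.ncard = 2 := by rw [ncard_compl_eq, hY]
  have hφY : ∀ i ∈ Y, φ i ∈ Y := fun i hi => hYφ ▸ mem_image_of_mem _ hi
  rcases hl with ⟨i, hi, rfl⟩ | ⟨i, hi, rfl⟩
  · constructor
    · rw [inter_Ablock, ncard_inl_inr,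
        Set.diff_singleton_eq_self (by simpa using hi),
        ncard_inter_singleton_of_mem hi, hY]
    · rw [inter_Ablock, ncard_inl_inr,
        ncard_diff_singleton_of_mem hi,
        ncard_inter_singleton_of_not_mem (by simpa using hi), hYc]
  · constructor
    · rw [inter_Bblock, ncard_inl_inr,
        ncard_inter_singleton_of_mem (hφY i hi),
        Set.diff_singleton_eq_self (by simpa using hi), hYc]
    · rw [inter_Bblock, ncard_inl_inr,
        ncard_inter_singleton_of_not_mem (by simpa using hφY i hi),
        ncard_diff_singleton_of_mem hi, hY]

lemma pointcount (Y : Set (Fin 4)) (hY : Y.ncard = 2) (hYφ : φ '' Y = Y)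
    (p : MPoint 4) (hp : p ∈ (Sum.inl '' Y ∪ Sum.inr '' Yᶜ : Set (MPoint 4))) :
    {l ∈ Ablock 4 '' Yᶜ ∪ Bblock 4 φ '' Y | p ∈ l}.ncard = 3 ∧
      {l ∈ Ablock 4 '' Y ∪ Bblock 4 φ '' Yᶜ | p ∈ l}.ncard = 1 := by
  have hYc : Yᶜ.ncard = 2 := by rw [ncard_compl_eq, hY]
  have hsymmY : ∀ j ∈ Y, φ.symm j ∈ Y := by
    intro j hj
    conv at hj => rw [← hYφ]
    obtain ⟨a, ha, hfa⟩ := hj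
    rw [← hfa]; simpa using ha
  have hsymmYc : ∀ j ∈ Yᶜ, φ.symm j ∈ Yᶜ := by
    intro j hj hmem
    exact hj (by rw [← φ.apply_symm_apply j]; exact hYφ ▸ mem_image_of_mem _ hmem)
  rcases hp with ⟨j, hj, rfl⟩ | ⟨j, hj, rfl⟩
  · -- p = inl j, j ∈ Y
    have e1 : {i ∈ Yᶜ | (Sum.inl j : MPoint 4) ∈ Ablock 4 i} = Yᶜ := by
      ext i
      simp only [mem_setOf_eq, mem_Ablock_inl, and_iff_left_iff_imp]
      intro hi hij
      exact hi (hij ▸ hj)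
    have e2 : {i ∈ Y | (Sum.inl j : MPoint 4) ∈ Bblock 4 φ i} = {φ.symm j} := by
      ext i
      simp only [mem_setOf_eq, mem_Bblock_inl, mem_singleton_iff]
      constructor
      · rintro ⟨-, h⟩; rw [h]; simp
      · rintro rfl; exact ⟨hsymmY j hj, by simp⟩
    have e3 : {i ∈ Y | (Sum.inl j : MPoint 4) ∈ Ablock 4 i} = Y \ {j} := by
      ext i
      simp only [mem_setOf_eq, mem_Ablock_inl, mem_diff, mem_singleton_iff]
      exact ⟨fun ⟨h1, h2⟩ => ⟨h1, fun h => h2 h.symm⟩, fun ⟨h1, h2⟩ => ⟨h1, fun h => h2 h.symm⟩⟩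
    have e4 : {i ∈ Yᶜ | (Sum.inl j : MPoint 4) ∈ Bblock 4 φ i} = ∅ := by
      ext i
      simp only [mem_setOf_eq, mem_Bblock_inl, mem_empty_iff_false, iff_false, not_and]
      intro hi hij
      exact hi (by rw [show i = φ.symm j by rw [hij]; simp]; exact hsymmY j hj)
    constructor
    · rw [filt, ncard_blocks (by norm_num), e1, e2, hYc, ncard_singleton]
    · rw [filt, ncard_blocks (by norm_num), e3, e4,
        ncard_diff_singleton_of_mem hj, hY, ncard_empty]
  · -- p = inr j, j ∈ Yᶜ
    have e1 : {i ∈ Yᶜ | (Sum.inr j : MPoint 4) ∈ Ablock 4 i} = {j} := by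
      ext i
      simp only [mem_setOf_eq, mem_Ablock_inr, mem_singleton_iff]
      exact ⟨fun ⟨_, h⟩ => h.symm, fun h => ⟨h ▸ hj, h.symm⟩⟩
    have e2 : {i ∈ Y | (Sum.inr j : MPoint 4) ∈ Bblock 4 φ i} = Y := by
      ext i
      simp only [mem_setOf_eq, mem_Bblock_inr, and_iff_left_iff_imp]
      intro hi hij
      exact hj (hij ▸ hi)
    have e3 : {i ∈ Y | (Sum.inr j : MPoint 4) ∈ Ablock 4 i} = ∅ := by
      ext i
      simp only [mem_setOf_eq, mem_Ablock_inr, mem_empty_iff_false, iff_false, not_and]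
      intro hi hij
      exact hj (hij ▸ hi)
    have e4 : {i ∈ Yᶜ | (Sum.inr j : MPoint 4) ∈ Bblock 4 φ i} = Yᶜ \ {j} := by
      ext i
      simp only [mem_setOf_eq, mem_Bblock_inr, mem_diff, mem_singleton_iff]
      exact ⟨fun ⟨h1, h2⟩ => ⟨h1, fun h => h2 h.symm⟩, fun ⟨h1, h2⟩ => ⟨h1, fun h => h2 h.symm⟩⟩
    constructor
    · rw [filt, ncard_blocks (by norm_num), e1, e2, hY, ncard_singleton]
    · rw [filt, ncard_blocks (by norm_num), e3, e4,
        ncard_diff_singleton_of_mem hj, hYc, ncard_empty]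

end Construction

/-- 𝔐_{(n,φ)} has a special decomposition iff n = 4 and φ preserves a 2-element subset of I. -/
theorem stmt7 (n : ℕ) (hn : 4 ≤ n) (φ : Equiv.Perm (Fin n)) :
    (∃ S₁ S₂ : MSimplex n, IsSpecialDecomp n φ S₁ S₂) ↔
      (n = 4 ∧ ∃ X : Set (Fin n), X.ncard = 2 ∧ φ '' X = X) := by
  constructor
  · rintro ⟨S₁, S₂, ⟨hPu, hPd, hP1n, hP2n, hLu, hLd, hL1n, hL2n, hBl1, hBl2, hPt1, hPt2⟩,
      hA1, hB1, hA2, hB2⟩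
    have hcomp : ∀ x, x ∈ S₂.1 ↔ x ∉ S₁.1 := by
      intro x
      constructor
      · intro h2 h1; exact Set.disjoint_left.mp hPd h1 h2
      · intro h1
        have hx : x ∈ S₁.1 ∪ S₂.1 := hPu ▸ mem_univ x
        rcases hx with h | h
        · exact absurd h h1
        · exact h
    have hP2c : S₂.1 = S₁.1ᶜ := by ext x; rw [mem_compl_iff]; exact hcomp x
    have P₁eq : S₁.1 = Sum.inl '' (Sum.inl ⁻¹' S₁.1) ∪ Sum.inr '' (Sum.inr ⁻¹' S₁.1) :=
      sum_decomp S₁.1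
    have P₂eq : S₂.1 = Sum.inl '' (Sum.inl ⁻¹' S₁.1)ᶜ ∪ Sum.inr '' (Sum.inr ⁻¹' S₁.1)ᶜ := by
      rw [hP2c]
      conv_lhs => rw [sum_decomp S₁.1ᶜ]
      rw [Set.preimage_compl, Set.preimage_compl]
    set S : Set (Fin n) := Sum.inl ⁻¹' S₁.1
    set T : Set (Fin n) := Sum.inr ⁻¹' S₁.1
    set U : Set (Fin n) := {i | Ablock n i ∈ S₁.2}
    set V : Set (Fin n) := {i | Bblock n φ i ∈ S₁.2}
    have L₁eq : S₁.2 = Ablock n '' U ∪ Bblock n φ '' V := by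
      apply Subset.antisymm
      · intro l hl
        have hlM : l ∈ ABlocks n ∪ BBlocks n φ := by
          rw [show ABlocks n ∪ BBlocks n φ = MBlocks n φ from rfl, ← hLu]
          exact Or.inl hl
        rcases hlM with ⟨i, rfl⟩ | ⟨i, rfl⟩
        · exact Or.inl ⟨i, hl, rfl⟩
        · exact Or.inr ⟨i, hl, rfl⟩
      · rintro l (⟨i, hi, rfl⟩ | ⟨i, hi, rfl⟩) <;> exact hi
    have hSTn : S.ncard + T.ncard = n := by
      rw [← ncard_inl_inr S T, ← P₁eq]; exact hP1n
    have hUVn : U.ncard + V.ncard = n := by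
      rw [← ncard_blocks (by omega) U V, ← L₁eq]; exact hL1n
    have c1 : ∀ i ∈ U, (Sᶜ \ {i}).ncard + (Tᶜ ∩ {i}).ncard = 1 := by
      intro i hi
      have h := (hBl1 (Ablock n i) hi).2
      rwa [P₂eq, inter_Ablock, ncard_inl_inr] at h
    have c2 : ∀ i ∉ U, (S \ {i}).ncard + (T ∩ {i}).ncard = 1 := by
      intro i hi
      have hiM : Ablock n i ∈ S₂.2 := by
        have hx : Ablock n i ∈ S₁.2 ∪ S₂.2 := by rw [hLu]; exact Or.inl ⟨i, rfl⟩
        rcases hx with h | h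
        · exact absurd h hi
        · exact h
      have h := (hBl2 (Ablock n i) hiM).2
      rwa [P₁eq, inter_Ablock, ncard_inl_inr] at h
    have c3 : ∀ i ∈ V, (Sᶜ ∩ {φ i}).ncard + (Tᶜ \ {i}).ncard = 1 := by
      intro i hi
      have h := (hBl1 (Bblock n φ i) hi).2
      rwa [P₂eq, inter_Bblock, ncard_inl_inr] at h
    have c4 : ∀ i ∉ V, (S ∩ {φ i}).ncard + (T \ {i}).ncard = 1 := by
      intro i hi
      have hiM : Bblock n φ i ∈ S₂.2 := by
        have hx : Bblock n φ i ∈ S₁.2 ∪ S₂.2 := by rw [hLu]; exact Or.inr ⟨i, rfl⟩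
        rcases hx with h | h
        · exact absurd h hi
        · exact h
      have h := (hBl2 (Bblock n φ i) hiM).2
      rwa [P₁eq, inter_Bblock, ncard_inl_inr] at h
    have hnotA : ¬(S = univ ∧ U = univ) := by
      rintro ⟨hSu, hUu⟩
      have hSn' : S.ncard = n := by rw [hSu, ncard_univ]; simp
      have hUn' : U.ncard = n := by rw [hUu, ncard_univ]; simp
      have hT0 : T = ∅ := (Set.ncard_eq_zero (toFinite _)).mp (by omega)
      have hV0 : V = ∅ := (Set.ncard_eq_zero (toFinite _)).mp (by omega)
      apply hA1
      have h1 : S₁.1 = Set.range Sum.inl := by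
        rw [P₁eq, hSu, hT0]; simp
      have h2 : S₁.2 = ABlocks n := by
        rw [L₁eq, hUu, hV0]; simp [ABlocks]
      exact Prod.ext_iff.mpr ⟨h1, h2⟩
    have hnotB : ¬(S = ∅ ∧ U = ∅) := by
      rintro ⟨hS0, hU0⟩
      have hSn' : S.ncard = 0 := by rw [hS0]; simp
      have hUn' : U.ncard = 0 := by rw [hU0]; simp
      have hTu : T = univ := eq_univ_of_ncard T (by omega)
      have hVu : V = univ := eq_univ_of_ncard V (by omega)
      apply hB1
      have h1 : S₁.1 = Set.range Sum.inr := by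
        rw [P₁eq, hS0, hTu]; simp
      have h2 : S₁.2 = BBlocks n φ := by
        rw [L₁eq, hU0, hVu]; simp [BBlocks]
      exact Prod.ext_iff.mpr ⟨h1, h2⟩
    obtain ⟨hn4, hS2, hφS⟩ := combo hn φ S T U V hSTn hUVn c1 c2 c3 c4 hnotA hnotB
    exact ⟨hn4, S, hS2, hφS⟩
  · rintro ⟨rfl, X, hX2, hXφ⟩
    have hXc2 : Xᶜ.ncard = 2 := by rw [ncard_compl_eq, hX2]
    have hXcφ : φ '' Xᶜ = Xᶜ := by
      rw [Set.image_compl_eq φ.bijective, hXφ]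
    obtain ⟨x₁, hx₁⟩ := Set.nonempty_of_ncard_ne_zero (show X.ncard ≠ 0 by omega)
    obtain ⟨x₂, hx₂⟩ := Set.nonempty_of_ncard_ne_zero (show Xᶜ.ncard ≠ 0 by omega)
    refine ⟨(Sum.inl '' X ∪ Sum.inr '' Xᶜ, Ablock 4 '' Xᶜ ∪ Bblock 4 φ '' X),
      (Sum.inl '' Xᶜ ∪ Sum.inr '' X, Ablock 4 '' X ∪ Bblock 4 φ '' Xᶜ),
      ⟨?_, ?_, ?_, ?_, ?_, ?_, ?_, ?_, ?_, ?_, ?_, ?_⟩, ?_, ?_, ?_, ?_⟩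
    · ext x; rcases x with j | j <;> simp <;> tauto
    · rw [Set.disjoint_left]
      rintro x (⟨j, hj, rfl⟩ | ⟨j, hj, rfl⟩) hx <;>
        rcases hx with (⟨k, hk, hk2⟩ | ⟨k, hk, hk2⟩) <;> simp_all
    · rw [ncard_inl_inr, hX2, hXc2]
    · rw [ncard_inl_inr, hX2, hXc2]
    · ext l
      constructor
      · rintro ((⟨i, -, rfl⟩ | ⟨i, -, rfl⟩) | (⟨i, -, rfl⟩ | ⟨i, -, rfl⟩))
        · exact Or.inl ⟨i, rfl⟩
        · exact Or.inr ⟨i, rfl⟩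
        · exact Or.inl ⟨i, rfl⟩
        · exact Or.inr ⟨i, rfl⟩
      · rintro (⟨i, rfl⟩ | ⟨i, rfl⟩)
        · by_cases hi : i ∈ X
          · exact Or.inr (Or.inl ⟨i, hi, rfl⟩)
          · exact Or.inl (Or.inl ⟨i, hi, rfl⟩)
        · by_cases hi : i ∈ X
          · exact Or.inl (Or.inr ⟨i, hi, rfl⟩)
          · exact Or.inr (Or.inr ⟨i, hi, rfl⟩)
    · rw [Set.disjoint_left]
      rintro l (⟨i, hi, rfl⟩ | ⟨i, hi, rfl⟩) (⟨k, hk, hlk⟩ | ⟨k, hk, hlk⟩)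
      · have := Ablock_injective hlk
        exact hi (this ▸ hk)
      · exact Ablock_ne_Bblock (by norm_num) i k hlk.symm
      · exact Ablock_ne_Bblock (by norm_num) k i hlk
      · have := Bblock_injective hlk
        exact (hk : k ∈ Xᶜ) (this ▸ hi)
    · rw [ncard_blocks (by norm_num), hX2, hXc2]
    · rw [ncard_blocks (by norm_num), hX2, hXc2]
    · intro l hl
      have h := blockcount X hX2 hXφ l hl
      exact ⟨by rw [h.1], h.2⟩
    · intro l hl
      have hl' : l ∈ Ablock 4 '' Xᶜᶜ ∪ Bblock 4 φ '' Xᶜ := by rwa [compl_compl]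
      have h := blockcount Xᶜ hXc2 hXcφ l hl'
      rw [compl_compl] at h
      exact ⟨by rw [h.1], h.2⟩
    · intro p hp
      have h := pointcount X hX2 hXφ p hp
      exact ⟨by rw [h.1], h.2⟩
    · intro p hp
      have hp' : p ∈ (Sum.inl '' Xᶜ ∪ Sum.inr '' Xᶜᶜ : Set (MPoint 4)) := by rwa [compl_compl]
      have h := pointcount Xᶜ hXc2 hXcφ p hp'
      rw [compl_compl] at h
      exact ⟨by rw [h.1], h.2⟩
    · intro h
      have h1 := congrArg Prod.fst h
      simp only [SimplexA] at h1
      have hx : Sum.inr x₂ ∈ Set.range (Sum.inl : Fin 4 → MPoint 4) :=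
        h1 ▸ Or.inr ⟨x₂, hx₂, rfl⟩
      obtain ⟨y, hy⟩ := hx
      cases hy
    · intro h
      have h1 := congrArg Prod.fst h
      simp only [SimplexB] at h1
      have hx : Sum.inl x₁ ∈ Set.range (Sum.inr : Fin 4 → MPoint 4) :=
        h1 ▸ Or.inl ⟨x₁, hx₁, rfl⟩
      obtain ⟨y, hy⟩ := hx
      cases hy
    · intro h
      have h1 := congrArg Prod.fst h
      simp only [SimplexA] at h1
      have hx : Sum.inr x₁ ∈ Set.range (Sum.inl : Fin 4 → MPoint 4) :=
        h1 ▸ Or.inr ⟨x₁, hx₁, rfl⟩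
      obtain ⟨y, hy⟩ := hx
      cases hy
    · intro h
      have h1 := congrArg Prod.fst h
      simp only [SimplexB] at h1
      have hx : Sum.inl x₂ ∈ Set.range (Sum.inr : Fin 4 → MPoint 4) :=
        h1 ▸ Or.inl ⟨x₂, hx₂, rfl⟩
      obtain ⟨y, hy⟩ := hx
      cases hy
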